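/- Let n ≥ 2 and c ∈ ℝ, and consider the operator L = ∑_{i=1}^n (2 x_i ∂_i² + c ∂_i). Then for the function G(x) = Δ(x)^{-1} on the set of x ∈ ℝ^n with pairwise distinct coordinates, the singular-drift operator identity ∑_{i=1}^n [2 x_i ∂_i² G + c ∂_i G + ∑_{j≠i} (4x_i/(x_i − x_j)) ∂_i G] = 0 holds. -/

import Mathlib

noncomputable def pd {n : ℕ} (i : Fin n) (f : (Fin n → ℝ) → ℝ) (x : Fin n → ℝ) : ℝ :=
  deriv (fun t => f (Function.update x i t)) (x i)

noncomputable def vd {n : ℕ} (x : Fin n → ℝ) : ℝ :=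
  ∏ i : Fin n, ∏ j ∈ Finset.Ioi i, (x i - x j)

open Finset

/-- the "sum of inverse differences" -/
noncomputable def Wf {n : ℕ} (i : Fin n) (x : Fin n → ℝ) : ℝ :=
  ∑ j ∈ Finset.univ.erase i, (x i - x j)⁻¹

noncomputable def Qf {n : ℕ} (i : Fin n) (x : Fin n → ℝ) : ℝ :=
  ∑ j ∈ Finset.univ.erase i, ((x i - x j) ^ 2)⁻¹

lemma vd_sigma {n : ℕ} (x : Fin n → ℝ) :
    vd x = ∏ p ∈ (Finset.univ : Finset (Fin n)).sigma (fun i => Finset.Ioi i),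
      (x p.1 - x p.2) := by
  rw [vd, Finset.prod_sigma]

lemma vd_ne_zero {n : ℕ} {x : Fin n → ℝ} (hx : ∀ i j, i ≠ j → x i ≠ x j) : vd x ≠ 0 := by
  rw [vd]
  rw [Finset.prod_ne_zero_iff]
  intro i _
  rw [Finset.prod_ne_zero_iff]
  intro j hj
  exact sub_ne_zero.mpr (hx i j (Finset.mem_Ioi.mp hj).ne)

lemma hasDerivAt_vd {n : ℕ} {x : Fin n → ℝ} (hx : ∀ i j, i ≠ j → x i ≠ x j) (i : Fin n) :
    HasDerivAt (fun t => vd (Function.update x i t)) (vd x * Wf i x) (x i) := by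
  classical
  set S := (Finset.univ : Finset (Fin n)).sigma (fun i => Finset.Ioi i) with hS
  set e : (Σ _ : Fin n, Fin n) → ℝ := fun p =>
    (if p.1 = i then (1:ℝ) else 0) - (if p.2 = i then (1:ℝ) else 0) with he
  have hcoord : ∀ k : Fin n, HasDerivAt (fun t => Function.update x i t k)
      (if k = i then (1:ℝ) else 0) (x i) := by
    intro k
    by_cases h : k = i
    · simpa [Function.update_apply, h] using hasDerivAt_id' (x i)
    · simpa [Function.update_apply, h] using hasDerivAt_const (x i) (x k)
  have H := HasDerivAt.fun_finsetProd (u := S)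
      (f := fun p t => Function.update x i t p.1 - Function.update x i t p.2)
      (f' := e) (x := x i) (fun p _ => (hcoord p.1).sub (hcoord p.2))
  have hx0 : Function.update x i (x i) = x := Function.update_eq_self i x
  have hfun : (fun t => ∏ p ∈ S, (Function.update x i t p.1 - Function.update x i t p.2))
      = fun t => vd (Function.update x i t) := by
    funext t; rw [vd_sigma]
  have hsub : ∀ p ∈ S, x p.1 - x p.2 ≠ 0 := by
    intro p hp
    obtain ⟨-, h2⟩ := Finset.mem_sigma.mp hp
    exact sub_ne_zero.mpr (hx _ _ (Finset.mem_Ioi.mp h2).ne)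
  have hprod : ∀ p ∈ S, ∏ q ∈ S.erase p, (x q.1 - x q.2) = vd x * (x p.1 - x p.2)⁻¹ := by
    intro p hp
    have h := Finset.prod_erase_mul S (fun q => (x q.1 - x q.2)) hp
    rw [← vd_sigma] at h
    field_simp [hsub p hp]
    linear_combination h
  have hsum : ∑ p ∈ S, (x p.1 - x p.2)⁻¹ * e p = Wf i x := by
    rw [hS, Finset.sum_sigma]
    have step : ∀ a : Fin n, ∀ b ∈ Finset.Ioi a, (x a - x b)⁻¹ * e ⟨a, b⟩
        = (if a = i then (x i - x b)⁻¹ else 0) + (if b = i then (x i - x a)⁻¹ else 0) := by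
      intro a b hb
      have hab : a ≠ b := (Finset.mem_Ioi.mp hb).ne
      simp only [he]
      by_cases ha : a = i <;> by_cases hbi : b = i
      · exact absurd (ha.trans hbi.symm) hab
      · rw [if_pos ha, if_neg hbi, if_pos ha, if_neg hbi]
        subst ha; ring
      · rw [if_neg ha, if_pos hbi, if_neg ha, if_pos hbi]
        subst hbi
        rw [show x a - x b = -(x b - x a) by ring, inv_neg]
        ring
      · rw [if_neg ha, if_neg hbi, if_neg ha, if_neg hbi]
        ring
    rw [Finset.sum_congr rfl (fun a _ => Finset.sum_congr rfl (step a))]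
    rw [Finset.sum_congr rfl (fun a _ => Finset.sum_add_distrib), Finset.sum_add_distrib]
    have A : ∑ a : Fin n, ∑ b ∈ Finset.Ioi a, (if a = i then (x i - x b)⁻¹ else 0)
        = ∑ b ∈ Finset.Ioi i, (x i - x b)⁻¹ := by
      rw [Finset.sum_eq_single i]
      · simp
      · intro a _ ha; simp [ha]
      · simp
    have B : ∑ a : Fin n, ∑ b ∈ Finset.Ioi a, (if b = i then (x i - x a)⁻¹ else 0)
        = ∑ a ∈ Finset.Iio i, (x i - x a)⁻¹ := by
      have : ∀ a : Fin n, ∑ b ∈ Finset.Ioi a, (if b = i then (x i - x a)⁻¹ else 0)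
          = if a ∈ Finset.Iio i then (x i - x a)⁻¹ else 0 := by
        intro a
        rw [Finset.sum_ite_eq' (Finset.Ioi a) i (fun _ => (x i - x a)⁻¹)]
        simp [Finset.mem_Ioi, Finset.mem_Iio]
      rw [Finset.sum_congr rfl (fun a _ => this a), Finset.sum_ite_mem, Finset.univ_inter]
    rw [A, B, Wf]
    have hE : Finset.univ.erase i = Finset.Iio i ∪ Finset.Ioi i := by
      ext j
      simp [Finset.mem_erase, Finset.mem_union, Finset.mem_Iio, Finset.mem_Ioi,
        lt_or_lt_iff_ne]
    rw [hE, Finset.sum_union (by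
      refine Finset.disjoint_left.mpr fun j h1 h2 => ?_
      exact absurd (Finset.mem_Iio.mp h1) (not_lt.mpr (le_of_lt (Finset.mem_Ioi.mp h2))))]
    ring
  have hval : ∑ p ∈ S, (∏ q ∈ S.erase p, (x q.1 - x q.2)) • e p = vd x * Wf i x := by
    rw [Finset.sum_congr rfl (fun p hp => by
      rw [smul_eq_mul, hprod p hp, mul_assoc])]
    rw [← Finset.mul_sum, hsum]
  simp only [hx0] at H
  rw [hval] at H
  rwa [hfun] at H

lemma hasDerivAt_inv_vd {n : ℕ} {x : Fin n → ℝ} (hx : ∀ i j, i ≠ j → x i ≠ x j) (i : Fin n) :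
    HasDerivAt (fun t => (vd (Function.update x i t))⁻¹) (-((vd x)⁻¹ * Wf i x)) (x i) := by
  have h := (hasDerivAt_vd hx i).fun_inv
    (by rw [Function.update_eq_self]; exact vd_ne_zero hx)
  simp only [Function.update_eq_self] at h
  refine h.congr_deriv ?_
  rw [div_eq_iff (pow_ne_zero 2 (vd_ne_zero hx))]
  field_simp

lemma pd_inv_vd {n : ℕ} {x : Fin n → ℝ} (hx : ∀ i j, i ≠ j → x i ≠ x j) (i : Fin n) :
    pd i (fun z => (vd z)⁻¹) x = -((vd x)⁻¹ * Wf i x) :=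
  (hasDerivAt_inv_vd hx i).deriv

lemma distinct_update {n : ℕ} {x : Fin n → ℝ} (hx : ∀ i j, i ≠ j → x i ≠ x j) (i : Fin n)
    {t : ℝ} (ht : ∀ j, j ≠ i → t ≠ x j) :
    ∀ a b, a ≠ b → Function.update x i t a ≠ Function.update x i t b := by
  intro a b hab
  rcases eq_or_ne a i with rfl | ha
  · rw [Function.update_self, Function.update_of_ne hab.symm]
    exact ht b hab.symm
  · rw [Function.update_of_ne ha]
    rcases eq_or_ne b i with rfl | hb
    · rw [Function.update_self]
      exact fun h => ht a ha h.symm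
    · rw [Function.update_of_ne hb]
      exact hx a b hab

lemma pd2_inv_vd {n : ℕ} {x : Fin n → ℝ} (hx : ∀ i j, i ≠ j → x i ≠ x j) (i : Fin n) :
    pd i (pd i (fun z => (vd z)⁻¹)) x = (vd x)⁻¹ * (Wf i x * Wf i x + Qf i x) := by
  have hev : (fun t => pd i (fun z => (vd z)⁻¹) (Function.update x i t))
      =ᶠ[nhds (x i)] fun t => -((vd (Function.update x i t))⁻¹
        * ∑ j ∈ Finset.univ.erase i, (t - x j)⁻¹) := by
    have h1 : ∀ᶠ t in nhds (x i), ∀ j ∈ Finset.univ.erase i, t ≠ x j := by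
      rw [Filter.eventually_all_finset]
      intro j hj
      exact eventually_ne_nhds (hx i j (Finset.mem_erase.mp hj).1.symm)
    filter_upwards [h1] with t ht
    have hz := distinct_update hx i (fun j hj => ht j (by simp [hj]))
    rw [pd_inv_vd hz i]
    have hWt : Wf i (Function.update x i t)
        = ∑ j ∈ Finset.univ.erase i, (t - x j)⁻¹ := by
      rw [Wf]
      refine Finset.sum_congr rfl fun j hj => ?_
      rw [Function.update_self, Function.update_of_ne (Finset.mem_erase.mp hj).1]
    rw [hWt]
  have h2 : HasDerivAt (fun t => ∑ j ∈ Finset.univ.erase i, (t - x j)⁻¹)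
      (-(Qf i x)) (x i) := by
    have key : ∀ j ∈ Finset.univ.erase i, HasDerivAt (fun t => (t - x j)⁻¹)
        (-((x i - x j) ^ 2)⁻¹) (x i) := by
      intro j hj
      have h := ((hasDerivAt_id' (x i)).sub_const (x j)).fun_inv
        (sub_ne_zero.mpr (hx i j (Finset.mem_erase.mp hj).1.symm))
      refine h.congr_deriv ?_
      rw [neg_div, one_div]
    have := HasDerivAt.fun_sum key
    simpa [Qf, Finset.sum_neg_distrib] using this
  have h1 := hasDerivAt_inv_vd hx i
  have H := (h1.fun_mul h2).fun_neg
  simp only [Function.update_eq_self] at H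
  have : pd i (pd i (fun z => (vd z)⁻¹)) x
      = deriv (fun t => -((vd (Function.update x i t))⁻¹
        * ∑ j ∈ Finset.univ.erase i, (t - x j)⁻¹)) (x i) := hev.deriv_eq
  rw [this, H.deriv]
  have hW : ∑ j ∈ Finset.univ.erase i, (x i - x j)⁻¹ = Wf i x := rfl
  rw [hW]
  ring

lemma sumW {n : ℕ} {x : Fin n → ℝ} (hx : ∀ i j, i ≠ j → x i ≠ x j) :
    ∑ i : Fin n, Wf i x = 0 := by
  classical
  set g : Fin n → Fin n → ℝ := fun i j => if i = j then 0 else (x i - x j)⁻¹ with hg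
  have key : ∀ i, Wf i x = ∑ j, g i j := by
    intro i
    rw [Wf, ← Finset.add_sum_erase Finset.univ (g i) (Finset.mem_univ i)]
    rw [show g i i = 0 by simp [hg], zero_add]
    exact Finset.sum_congr rfl fun j hj => by
      simp [hg, ((Finset.mem_erase.mp hj).1.symm : i ≠ j)]
  have hanti : ∀ i j, g i j + g j i = 0 := by
    intro i j
    rcases eq_or_ne i j with rfl | h
    · simp [hg]
    · simp only [hg, if_neg h, if_neg h.symm]
      rw [show x j - x i = -(x i - x j) by ring, inv_neg]
      ring
  have hcomm : ∑ i : Fin n, ∑ j : Fin n, g i j = ∑ i : Fin n, ∑ j : Fin n, g j i :=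
    Finset.sum_comm
  have h2 : (∑ i : Fin n, ∑ j : Fin n, g i j) + ∑ i : Fin n, ∑ j : Fin n, g j i = 0 := by
    rw [← Finset.sum_add_distrib]
    refine Finset.sum_eq_zero fun i _ => ?_
    rw [← Finset.sum_add_distrib]
    exact Finset.sum_eq_zero fun j _ => hanti i j
  rw [Finset.sum_congr rfl (fun i _ => key i)]
  linarith [hcomm, h2]

lemma sumT {n : ℕ} {x : Fin n → ℝ} (hx : ∀ i j, i ≠ j → x i ≠ x j) :
    ∑ i : Fin n, x i * (Qf i x - Wf i x * Wf i x) = 0 := by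
  classical
  set H : Fin n → Fin n → Fin n → ℝ := fun i j k =>
    if i = j ∨ i = k ∨ j = k then 0 else x i * ((x i - x j)⁻¹ * (x i - x k)⁻¹) with hH
  have stepA : ∀ i : Fin n, x i * (Wf i x * Wf i x - Qf i x) = ∑ j, ∑ k, H i j k := by
    intro i
    have e1 : Wf i x * Wf i x = ∑ j ∈ Finset.univ.erase i,
        ∑ k ∈ Finset.univ.erase i, (x i - x j)⁻¹ * (x i - x k)⁻¹ := by
      rw [Wf, Finset.sum_mul_sum]
    have e2 : ∀ j ∈ Finset.univ.erase i,
        ∑ k ∈ Finset.univ.erase i, (x i - x j)⁻¹ * (x i - x k)⁻¹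
        = ((x i - x j) ^ 2)⁻¹ + ∑ k ∈ (Finset.univ.erase i).erase j,
            (x i - x j)⁻¹ * (x i - x k)⁻¹ := by
      intro j hj
      rw [← Finset.add_sum_erase _ _ hj]
      congr 1
      rw [sq, mul_inv]
    have e3 : Wf i x * Wf i x - Qf i x
        = ∑ j ∈ Finset.univ.erase i, ∑ k ∈ (Finset.univ.erase i).erase j,
            (x i - x j)⁻¹ * (x i - x k)⁻¹ := by
      rw [e1, Finset.sum_congr rfl e2, Finset.sum_add_distrib, Qf]
      ring
    rw [show x i * (Wf i x * Wf i x - Qf i x)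
        = ∑ j ∈ Finset.univ.erase i, ∑ k ∈ (Finset.univ.erase i).erase j,
            x i * ((x i - x j)⁻¹ * (x i - x k)⁻¹) by
      rw [e3, Finset.mul_sum]
      exact Finset.sum_congr rfl fun j _ => Finset.mul_sum _ _ _]
    have inner : ∀ j ∈ Finset.univ.erase i,
        ∑ k ∈ (Finset.univ.erase i).erase j, x i * ((x i - x j)⁻¹ * (x i - x k)⁻¹)
        = ∑ k, H i j k := by
      intro j hj
      have hij : i ≠ j := (Finset.mem_erase.mp hj).1.symm
      have hvan : ∀ k ∈ Finset.univ, k ∉ (Finset.univ.erase i).erase j → H i j k = 0 := by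
        intro k _ hk
        by_cases h1 : k = j
        · subst h1; simp [hH]
        · have h2 : k = i := by
            by_contra h2
            exact hk (by simp [h1, h2])
          subst h2; simp [hH]
      rw [← Finset.sum_subset (Finset.subset_univ _) hvan]
      refine Finset.sum_congr rfl fun k hk => ?_
      have h1 : k ≠ j := (Finset.mem_erase.mp hk).1
      have h2 : k ≠ i := (Finset.mem_erase.mp (Finset.mem_erase.mp hk).2).1
      simp [hH, hij, h2.symm, h1.symm]
    rw [Finset.sum_congr rfl inner]
    refine Finset.sum_subset (Finset.subset_univ _) fun j _ hj => ?_
    have hji : j = i := by simpa using hj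
    subst hji
    exact Finset.sum_eq_zero fun k _ => by simp [hH]
  have hT1 : ∑ i : Fin n, ∑ j : Fin n, ∑ k : Fin n, H j k i
      = ∑ i : Fin n, ∑ j : Fin n, ∑ k : Fin n, H i j k := by
    rw [Finset.sum_comm]
    exact Finset.sum_congr rfl fun j _ => Finset.sum_comm
  have hT2 : ∑ i : Fin n, ∑ j : Fin n, ∑ k : Fin n, H k i j
      = ∑ i : Fin n, ∑ j : Fin n, ∑ k : Fin n, H i j k := by
    rw [Finset.sum_congr rfl fun i (_ : i ∈ Finset.univ) =>
      (Finset.sum_comm (s := Finset.univ) (t := Finset.univ) (f := fun j k => H k i j))]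
    exact Finset.sum_comm
  have hpoint : ∀ i j k : Fin n, H i j k + H j k i + H k i j = 0 := by
    intro i j k
    by_cases hc : i = j ∨ i = k ∨ j = k
    · have c1 : (j = k ∨ j = i ∨ k = i) := by tauto
      have c2 : (k = i ∨ k = j ∨ i = j) := by tauto
      simp [hH, hc, c1, c2]
    · push_neg at hc
      obtain ⟨h1, h2, h3⟩ := hc
      have c0 : ¬(i = j ∨ i = k ∨ j = k) := by tauto
      have c1 : ¬(j = k ∨ j = i ∨ k = i) := by tauto
      have c2 : ¬(k = i ∨ k = j ∨ i = j) := by tauto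
      simp only [hH]
      rw [if_neg c0, if_neg c1, if_neg c2]
      have d1 := sub_ne_zero.mpr (hx i j h1)
      have d2 := sub_ne_zero.mpr (hx i k h2)
      have d3 := sub_ne_zero.mpr (hx j k h3)
      have d4 := sub_ne_zero.mpr (hx j i h1.symm)
      have d5 := sub_ne_zero.mpr (hx k i h2.symm)
      have d6 := sub_ne_zero.mpr (hx k j h3.symm)
      field_simp [d1, d2, d3, d4, d5, d6]
      ring
  have hzero : (∑ i : Fin n, ∑ j : Fin n, ∑ k : Fin n, H i j k) = 0 := by
    have h3 : (∑ i : Fin n, ∑ j : Fin n, ∑ k : Fin n, H i j k)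
        + (∑ i : Fin n, ∑ j : Fin n, ∑ k : Fin n, H j k i)
        + (∑ i : Fin n, ∑ j : Fin n, ∑ k : Fin n, H k i j) = 0 := by
      rw [← Finset.sum_add_distrib, ← Finset.sum_add_distrib]
      refine Finset.sum_eq_zero fun i _ => ?_
      rw [← Finset.sum_add_distrib, ← Finset.sum_add_distrib]
      refine Finset.sum_eq_zero fun j _ => ?_
      rw [← Finset.sum_add_distrib, ← Finset.sum_add_distrib]
      exact Finset.sum_eq_zero fun k _ => hpoint i j k
    rw [hT1, hT2] at h3
    linarith
  have : ∑ i : Fin n, x i * (Wf i x * Wf i x - Qf i x) = 0 := by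
    rw [Finset.sum_congr rfl fun i _ => stepA i]
    exact hzero
  have hflip : ∀ i : Fin n, x i * (Qf i x - Wf i x * Wf i x)
      = -(x i * (Wf i x * Wf i x - Qf i x)) := fun i => by ring
  rw [Finset.sum_congr rfl fun i _ => hflip i, Finset.sum_neg_distrib, this, neg_zero]

theorem inverse_vandermonde_annihilated (n : ℕ) (hn : 2 ≤ n) (c : ℝ)
    (x : Fin n → ℝ) (hx : ∀ i j, i ≠ j → x i ≠ x j) :
    ∑ i : Fin n, (2 * x i * pd i (pd i (fun z => (vd z)⁻¹)) x
        + c * pd i (fun z => (vd z)⁻¹) x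
        + ∑ j ∈ Finset.univ.erase i, (4 * x i / (x i - x j))
            * pd i (fun z => (vd z)⁻¹) x) = 0 := by
  have hterm : ∀ i : Fin n, 2 * x i * pd i (pd i (fun z => (vd z)⁻¹)) x
        + c * pd i (fun z => (vd z)⁻¹) x
        + ∑ j ∈ Finset.univ.erase i, (4 * x i / (x i - x j)) * pd i (fun z => (vd z)⁻¹) x
      = (2 * (vd x)⁻¹) * (x i * (Qf i x - Wf i x * Wf i x)) + (-(c * (vd x)⁻¹)) * Wf i x := by
    intro i
    rw [pd2_inv_vd hx i, pd_inv_vd hx i]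
    have hdrift : ∑ j ∈ Finset.univ.erase i, (4 * x i / (x i - x j))
          * (-((vd x)⁻¹ * Wf i x))
        = (4 * x i * Wf i x) * (-((vd x)⁻¹ * Wf i x)) := by
      rw [← Finset.sum_mul]
      congr 1
      rw [Wf, Finset.mul_sum]
      exact Finset.sum_congr rfl fun j _ => by rw [div_eq_mul_inv]
    rw [hdrift]
    ring
  rw [Finset.sum_congr rfl fun i _ => hterm i, Finset.sum_add_distrib,
    ← Finset.mul_sum, ← Finset.mul_sum, sumT hx, sumW hx]
  ring
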